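/- An element a of the field of fractions K of an integral domain I is integral over I if and only if there exist nonzero elements z₁, …, zₙ ∈ K such that a ∈ I[z₁^{ε₁}, …, zₙ^{εₙ}] for every choice of signs εᵢ = ±1. -/

import Mathlib

open Polynomial

/-- If `x ≠ 0` is integral over a subring `R` of a field, then
`x ∈ R[x⁻¹]`. -/
lemma mem_closure_union_inv {K : Type} [Field K] (R : Subring K) {x : K} (hx : x ≠ 0)
    (h : IsIntegral R x) : x ∈ Subring.closure ((R : Set K) ∪ {x⁻¹}) := by
  obtain ⟨p, pm, pe⟩ := h
  set q : K[X] := (p * X).map (algebraMap R K) with hq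
  have hqm : q.Monic := (pm.mul monic_X).map _
  have hqe : q.eval x = 0 := by
    rw [hq, eval_map, eval₂_mul, eval₂_X, pe, zero_mul]
  have hqc : ∀ i, q.coeff i ∈ (R : Set K) := by
    intro i
    rw [hq, coeff_map]
    exact ((p * X).coeff i).2
  set m := q.natDegree with hm
  have hm1 : 1 ≤ m := by
    rw [hm, hq, (pm.mul monic_X).natDegree_map, natDegree_mul_X pm.ne_zero]
    omega
  have hsum : ∑ i ∈ Finset.range (m + 1), q.coeff i * x ^ i = 0 := by
    rw [← eval_eq_sum_range, hqe]
  rw [Finset.sum_range_succ, hqm.coeff_natDegree, one_mul] at hsum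
  have hxm : x ^ m = -∑ i ∈ Finset.range m, q.coeff i * x ^ i := by
    linear_combination hsum
  have key : x = ∑ i ∈ Finset.range m, -(q.coeff i) * (x⁻¹) ^ (m - 1 - i) := by
    have hne : x ^ (m - 1) ≠ 0 := pow_ne_zero _ hx
    apply mul_right_cancel₀ hne
    have hL : x * x ^ (m - 1) = x ^ m := by
      rw [← pow_succ']
      congr 1
      omega
    rw [hL, Finset.sum_mul, hxm, ← Finset.sum_neg_distrib]
    apply Finset.sum_congr rfl
    intro i hi
    rw [Finset.mem_range] at hi
    have : (x⁻¹) ^ (m - 1 - i) * x ^ (m - 1) = x ^ i := by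
      rw [inv_pow, inv_mul_eq_div, div_eq_iff (pow_ne_zero _ hx), ← pow_add]
      congr 1
      omega
    rw [mul_assoc, this]
    ring
  have hmem : (∑ i ∈ Finset.range m, -(q.coeff i) * (x⁻¹) ^ (m - 1 - i)) ∈
      Subring.closure ((R : Set K) ∪ {x⁻¹}) := by
    refine Subring.sum_mem _ fun i _ => ?_
    have h1 : x⁻¹ ∈ Subring.closure ((R : Set K) ∪ {x⁻¹}) :=
      Subring.subset_closure (Or.inr rfl)
    have h2 : q.coeff i ∈ Subring.closure ((R : Set K) ∪ {x⁻¹}) :=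
      Subring.subset_closure (Or.inl (hqc i))
    exact mul_mem (neg_mem h2) (pow_mem h1 _)
  simpa only [← key] using hmem

/-- If `x` belongs to every valuation subring containing `I`, then `x` is integral over `I`. -/
lemma isIntegral_of_forall_valuationSubring {K : Type} [Field K] (I : Subring K) (x : K)
    (H : ∀ V : ValuationSubring K, I ≤ V.toSubring → x ∈ V) : IsIntegral I x := by
  by_contra hni
  have hx0 : x ≠ 0 := fun e => hni (e ▸ isIntegral_zero)
  set R : Subring K := (Algebra.adjoin I {x⁻¹}).toSubring with hR
  have hinvR : x⁻¹ ∈ R := Algebra.self_mem_adjoin_singleton I x⁻¹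
  have hIR : I ≤ R := fun r hr => (Algebra.adjoin I {x⁻¹}).algebraMap_mem ⟨r, hr⟩
  have hproper : Ideal.span {(⟨x⁻¹, hinvR⟩ : R)} ≠ ⊤ := by
    intro htop
    rw [Ideal.eq_top_iff_one] at htop
    rw [Ideal.mem_span_singleton'] at htop
    obtain ⟨r, hr⟩ := htop
    have hrA : (r : K) ∈ Algebra.adjoin I {x⁻¹} := r.2
    rw [Algebra.adjoin_singleton_eq_range_aeval] at hrA
    obtain ⟨p, hp⟩ := hrA
    have hf : Polynomial.eval₂ (algebraMap I K) x⁻¹ (p * X - 1) = 0 := by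
      have h1 : (r : K) * x⁻¹ = 1 := congrArg Subtype.val hr
      rw [eval₂_sub, eval₂_mul, eval₂_X, eval₂_one]
      rw [show Polynomial.eval₂ (algebraMap I K) x⁻¹ p = (r : K) from hp ▸ rfl]
      rw [h1, sub_self]
    have hinv0 : x⁻¹ ≠ 0 := inv_ne_zero hx0
    have := (isUnit_iff_ne_zero.mpr hinv0).invertible
    have hrev : Polynomial.aeval x (p * X - 1).reverse = 0 := by
      simpa [← Polynomial.aeval_def] using
        (Polynomial.eval₂_reverse_eq_zero_iff (algebraMap I K) x⁻¹ (p * X - 1)).mpr hf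
    have hc0 : (p * X - 1).coeff 0 = -1 := by
      simp [coeff_mul_X_zero]
    have hc0' : (p * X - 1).coeff 0 ≠ 0 := by
      rw [hc0]
      intro h
      have : ((-1 : I) : K) = ((0 : I) : K) := congrArg _ h
      simp at this
    have htd : (p * X - 1).natTrailingDegree = 0 :=
      Polynomial.natTrailingDegree_eq_zero.mpr (Or.inr hc0')
    have hmon : (-(p * X - 1).reverse).Monic := by
      rw [Polynomial.Monic.def, leadingCoeff_neg, Polynomial.reverse_leadingCoeff,
        Polynomial.trailingCoeff, htd, hc0]
      simp
    refine hni ⟨-(p * X - 1).reverse, ?_, ?_⟩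
    · exact hmon
    · rw [Polynomial.eval₂_neg, ← Polynomial.aeval_def, hrev, neg_zero]
  obtain ⟨M, hMmax, hleM⟩ := Ideal.exists_le_maximal _ hproper
  haveI := hMmax.isPrime
  have hyM : (⟨x⁻¹, hinvR⟩ : R) ∈ M := hleM (Ideal.mem_span_singleton_self _)
  set A := LocalSubring.ofPrime R M with hA
  have h1 : ¬ IsUnit (algebraMap R A.toSubring ⟨x⁻¹, hinvR⟩) := by
    rw [IsLocalization.AtPrime.isUnit_to_map_iff A.toSubring M]
    exact fun h => h hyM
  obtain ⟨V, hV1, hVloc⟩ := A.exists_le_valuationSubring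
  have hIV : I ≤ V.toSubring := le_trans hIR (le_trans (LocalSubring.le_ofPrime R M) hV1)
  have hxV : x ∈ V := H V hIV
  have hinvV : x⁻¹ ∈ V.toSubring := hV1 (LocalSubring.le_ofPrime R M hinvR)
  have hu : IsUnit (⟨x⁻¹, hinvV⟩ : V.toSubring) :=
    isUnit_iff_exists_inv.mpr ⟨⟨x, hxV⟩, Subtype.ext (inv_mul_cancel₀ hx0)⟩
  have heq : Subring.inclusion hV1 (algebraMap R A.toSubring ⟨x⁻¹, hinvR⟩)
      = (⟨x⁻¹, hinvV⟩ : V.toSubring) := by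
    ext
    rfl
  exact h1 (hVloc.map_nonunit _ (heq ▸ hu))

/-- Integrality over a subring extends to larger subrings. -/
lemma isIntegral_of_le {K : Type} [Field K] {I J : Subring K} (h : I ≤ J) {x : K}
    (hx : IsIntegral I x) : IsIntegral J x := by
  obtain ⟨p, pm, pe⟩ := hx
  refine ⟨p.map (Subring.inclusion h), pm.map _, ?_⟩
  have hcomp : (algebraMap J K).comp (Subring.inclusion h) = algebraMap I K := rfl
  rw [Polynomial.eval₂_map, hcomp]
  exact pe


/-- a ∈ K is integral over I iff there are nonzero z₁,…,zₙ ∈ K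
with a ∈ I[z₁^{ε₁},…,zₙ^{εₙ}] for every choice of signs εᵢ = ±1. -/
theorem stmt_18 (K : Type) [Field K] (I : Subring K)
    (hfrac : ∀ x : K, ∃ a ∈ I, ∃ b ∈ I, b ≠ 0 ∧ x = a / b)
    (a : K) :
    IsIntegral I a ↔
      ∃ (n : ℕ) (z : Fin n → K), (∀ i, z i ≠ 0) ∧
        ∀ ε : Fin n → Bool,
          a ∈ Subring.closure
            ((I : Set K) ∪ Set.range (fun i => if ε i then z i else (z i)⁻¹)) := by
  constructor
  · intro h
    by_cases ha : a = 0
    · refine ⟨0, fun i => i.elim0, fun i => i.elim0, fun ε => ?_⟩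
      rw [ha]
      exact Subring.zero_mem _
    · refine ⟨1, fun _ => a, fun _ => ha, fun ε => ?_⟩
      by_cases hε : ε 0 = true
      · exact Subring.subset_closure (Or.inr ⟨0, by simp [hε]⟩)
      · refine Subring.closure_mono (Set.union_subset_union_right _ ?_)
          (mem_closure_union_inv I ha h)
        rintro y hy
        rw [Set.mem_singleton_iff] at hy
        exact ⟨0, by simp [hε, hy]⟩
  · rintro ⟨n, z, hz, hmem⟩
    apply isIntegral_of_forall_valuationSubring
    intro V hIV
    classical
    set ε : Fin n → Bool := fun i => if z i ∈ V then true else false with hε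
    have hsub : Set.range (fun i => if ε i then z i else (z i)⁻¹) ⊆ (V.toSubring : Set K) := by
      rintro _ ⟨i, rfl⟩
      by_cases h : z i ∈ V
      · simpa [hε, h] using h
      · have h' : (z i)⁻¹ ∈ V := (V.mem_or_inv_mem (z i)).resolve_left h
        simpa [hε, h] using h'
    have : Subring.closure ((I : Set K) ∪
        Set.range (fun i => if ε i then z i else (z i)⁻¹)) ≤ V.toSubring :=
      Subring.closure_le.mpr (Set.union_subset hIV hsub)
    exact this (hmem ε)
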